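/- arXiv:math/0601228 — 3 statements merged into one kernel-verified Lean document; each statement's English description precedes it below -/
import Mathlib

section
/- Let ℬ be a unital C*-algebra, F a Hilbert ℬ-ℬ-bimodule, and for (β, ζ) ∈ ℬ × F let the unit ξ^⊙(β,ζ) in the time ordered Fock module be given by its n-particle components ξ_t^n(t_n,...,t_1) = e^{(t−t_n)β}ζ ⊙ e^{(t_n−t_{n-1})β}ζ ⊙ ... ⊙ e^{(t_2−t_1)β}ζ e^{t_1 β} on the simplex t > t_n > ... > t_1 > 0. Then ξ^⊙(β,ζ) is central (i.e. b ξ_t = ξ_t b for all b ∈ ℬ, t ≥ 0) if and only if β lies in the center of ℬ and ζ satisfies bζ = ζb for all b ∈ ℬ. -/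
/-- The time-ordered component
`ξ_tⁿ(t_n, …, t_1) = e^{(t-t_n)β}ζ ⊙ e^{(t_n-t_{n-1})β}ζ ⊙ ⋯ ⊙ e^{(t_2-t_1)β}ζ e^{t_1β}`
of the unit `ξ^⊙(β,ζ)` of the time ordered Fock module, built from the data:
`M n` is the `(n+1)`-fold internal tensor power `F^{⊙(n+1)}`, `ι : F → M 0` the
identification of `F` with the one-particle space, `tmul` the tensor multiplication
`F × F^{⊙(n+1)} → F^{⊙(n+2)}`, `Fr` the right action of `ℬ` on `F`, `eB s = e^{sβ}` and
`g s = e^{sβ}ζ`.  The times are listed in decreasing order `[t_n, …, t_1]`. -/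
noncomputable def timeOrderedUnitComp {B F : Type*} {M : ℕ → Type*}
    (ι : F → M 0) (tmul : ∀ n, F → M n → M (n + 1)) (Fr : B → F → F)
    (eB : ℝ → B) (g : ℝ → F) : (t : ℝ) → (ts : List ℝ) → M (ts.length - 1)
  | _, [] => ι (g 0)  -- junk value; only nonempty time tuples are used
  | t, [s] => ι (Fr (eB s) (g (t - s)))
  | t, s :: s' :: rest =>
      tmul _ (g (t - s)) (timeOrderedUnitComp ι tmul Fr eB g s (s' :: rest))

/-- **Centrality of the units of the time ordered Fock module** (used for
Proposition 6.6).  The unit `ξ^⊙(β,ζ)` — with 0-particle components `e^{tβ}` and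
`n`-particle components `timeOrderedUnitComp` — is central, i.e. `b ξ_t = ξ_t b` for all
`b ∈ ℬ` and `t ≥ 0`, if and only if `β` lies in the center of `ℬ` and `ζ` satisfies
`bζ = ζb` for all `b ∈ ℬ`. -/
theorem time_ordered_unit_central_iff
    {B : Type*} [CStarAlgebra B]
    {F : Type*}
    -- left and right actions of B on the bimodule F:
    (Fl Fr : B → F → F)
    (hFl_mul : ∀ a b x, Fl (a * b) x = Fl a (Fl b x)) (hFl_one : ∀ x, Fl 1 x = x)
    (hFr_mul : ∀ a b x, Fr (a * b) x = Fr b (Fr a x)) (hFr_one : ∀ x, Fr 1 x = x)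
    (hFlFr : ∀ a b x, Fl a (Fr b x) = Fr b (Fl a x))
    -- the internal tensor powers `M n = F^{⊙(n+1)}` with their left and right actions:
    {M : ℕ → Type*} (Bl Br : ∀ n, B → M n → M n)
    (ι : F → M 0) (hι_inj : Function.Injective ι)
    (tmul : ∀ n, F → M n → M (n + 1))
    (hι_l : ∀ b x, Bl 0 b (ι x) = ι (Fl b x))
    (hι_r : ∀ b x, Br 0 b (ι x) = ι (Fr b x))
    (htmul_l : ∀ n b x (y : M n), Bl (n + 1) b (tmul n x y) = tmul n (Fl b x) y)
    (htmul_r : ∀ n b x (y : M n), Br (n + 1) b (tmul n x y) = tmul n x (Br n b y))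
    (htmul_mid : ∀ n b x (y : M n), tmul n (Fr b x) y = tmul n x (Bl n b y))
    (β : B) (ζ : F)
    (eB : ℝ → B) (heB : ∀ s, eB s = NormedSpace.exp (s • β))
    (g : ℝ → F) (hg : ∀ s, g s = Fl (eB s) ζ) :
    -- centrality of all components of the unit `ξ^⊙(β,ζ)` …
    ((∀ t : ℝ, 0 ≤ t → ∀ b, b * eB t = eB t * b) ∧
      (∀ (b : B) (t : ℝ) (ts : List ℝ), ts ≠ [] →
        List.Chain' (· > ·) (t :: ts) → (∀ x ∈ ts, 0 < x) →
        Bl _ b (timeOrderedUnitComp ι tmul Fr eB g t ts)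
          = Br _ b (timeOrderedUnitComp ι tmul Fr eB g t ts)))
    -- … holds if and only if `β` is central in `ℬ` and `ζ` is central in `F`:
    ↔ ((∀ b, β * b = b * β) ∧ (∀ b, Fl b ζ = Fr b ζ)) := by
  constructor
  · rintro ⟨h0, h1⟩
    -- First: β is central, via differentiating t ↦ b·e^{tβ} - e^{tβ}·b ≡ 0 on (0,∞).
    have hβ : ∀ b, β * b = b * β := by
      intro b
      have hc1 : b * NormedSpace.exp ((1:ℝ) • β) = NormedSpace.exp ((1:ℝ) • β) * b := by
        have := h0 1 one_pos.le b; rwa [heB] at this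
      have hd1 : HasDerivAt
          (fun u : ℝ => b * NormedSpace.exp (u • β) - NormedSpace.exp (u • β) * b)
          (b * (NormedSpace.exp ((1:ℝ) • β) * β) -
            NormedSpace.exp ((1:ℝ) • β) * β * b) 1 :=
        ((hasDerivAt_exp_smul_const β (1:ℝ)).const_mul b).sub
          ((hasDerivAt_exp_smul_const β (1:ℝ)).mul_const b)
      have hev : (fun u : ℝ => b * NormedSpace.exp (u • β) - NormedSpace.exp (u • β) * b)
          =ᶠ[nhds (1:ℝ)] (fun _ => (0:B)) := by
        filter_upwards [Ioi_mem_nhds (zero_lt_one)] with u hu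
        have := h0 u (le_of_lt hu) b
        rw [heB] at this
        simp [this]
      have hd0 : HasDerivAt (fun _ : ℝ => (0:B))
          (b * (NormedSpace.exp ((1:ℝ) • β) * β) -
            NormedSpace.exp ((1:ℝ) • β) * β * b) 1 :=
        hd1.congr_of_eventuallyEq hev.symm
      have hzero := hd0.unique (hasDerivAt_const 1 0)
      have hkey : NormedSpace.exp ((1:ℝ) • β) * (b * β)
          = NormedSpace.exp ((1:ℝ) • β) * (β * b) := by
        have h2 : b * (NormedSpace.exp ((1:ℝ) • β) * β)
            = NormedSpace.exp ((1:ℝ) • β) * β * b := sub_eq_zero.mp hzero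
        calc NormedSpace.exp ((1:ℝ) • β) * (b * β)
            = (NormedSpace.exp ((1:ℝ) • β) * b) * β := by rw [mul_assoc]
          _ = (b * NormedSpace.exp ((1:ℝ) • β)) * β := by rw [hc1]
          _ = b * (NormedSpace.exp ((1:ℝ) • β) * β) := by rw [mul_assoc]
          _ = NormedSpace.exp ((1:ℝ) • β) * β * b := h2
          _ = NormedSpace.exp ((1:ℝ) • β) * (β * b) := by rw [mul_assoc]
      have hinv : NormedSpace.exp (-β) * NormedSpace.exp β = 1 := by
        rw [← NormedSpace.exp_add_of_commute_of_mem_ball (𝕂 := ℝ) (Commute.refl β).neg_left ((NormedSpace.expSeries_radius_eq_top ℝ B).symm ▸ edist_lt_top _ _) ((NormedSpace.expSeries_radius_eq_top ℝ B).symm ▸ edist_lt_top _ _)]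
        simp
      have := congrArg (fun x => NormedSpace.exp (-((1:ℝ) • β)) * x) hkey
      simpa [← mul_assoc, hinv, one_smul] using this.symm
    -- eB commutes with everything, for every time (also negative ones)
    have hcomm : ∀ (b : B) (s : ℝ), b * eB s = eB s * b := by
      intro b s
      rw [heB]
      exact (((show Commute β b from hβ b).smul_left s).exp_left).symm
    have heInv : ∀ s, eB (-s) * eB s = 1 := by
      intro s
      rw [heB, heB,
        ← NormedSpace.exp_add_of_commute_of_mem_ball (𝕂 := ℝ)
          (((Commute.refl β).smul_left (-s)).smul_right s) ((NormedSpace.expSeries_radius_eq_top ℝ B).symm ▸ edist_lt_top _ _) ((NormedSpace.expSeries_radius_eq_top ℝ B).symm ▸ edist_lt_top _ _)]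
      simp [← add_smul]
    have heInv' : ∀ s, eB s * eB (-s) = 1 := by
      intro s
      have := heInv (-s); rwa [neg_neg] at this
    have hFlcancel : ∀ (s : ℝ) (x : F), Fl (eB (-s)) (Fl (eB s) x) = x := by
      intro s x; rw [← hFl_mul, heInv, hFl_one]
    have hFrcancel : ∀ (s : ℝ) (x : F), Fr (eB (-s)) (Fr (eB s) x) = x := by
      intro s x; rw [← hFr_mul, heInv', hFr_one]
    refine ⟨hβ, ?_⟩
    intro b
    have hcent := h1 b 2 [1] (by simp)
      (List.isChain_pair.mpr (by norm_num)) (by intro x hx; simp at hx; simp [hx])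
    simp only [timeOrderedUnitComp, List.length_cons, List.length_nil] at hcent
    rw [hι_l, hι_r] at hcent
    have hc2 := hι_inj hcent
    -- peel off the outer right action of eB 1
    have hg1 : Fl b (g (2 - 1)) = Fr b (g (2 - 1)) := by
      have e1 : Fr (eB 1) (Fl b (g (2 - 1))) = Fr (eB 1) (Fr b (g (2 - 1))) := by
        rw [← hFlFr, hc2, ← hFr_mul, ← hcomm, hFr_mul]
      have := congrArg (Fr (eB (-1))) e1
      rwa [hFrcancel, hFrcancel] at this
    -- peel off the left action of eB 1
    rw [hg] at hg1
    have e2 : Fl (eB (2 - 1)) (Fl b ζ) = Fl (eB (2 - 1)) (Fr b ζ) := by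
      rw [← hFl_mul, ← hcomm, hFl_mul, hg1, hFlFr]
    have := congrArg (Fl (eB (-(2 - 1)))) e2
    rwa [hFlcancel, hFlcancel] at this
  · rintro ⟨hβ, hζ⟩
    have hcomm : ∀ (b : B) (s : ℝ), b * eB s = eB s * b := by
      intro b s
      rw [heB]
      exact (((show Commute β b from hβ b).smul_left s).exp_left).symm
    have hgc : ∀ (b : B) (s : ℝ), Fl b (g s) = Fr b (g s) := by
      intro b s
      rw [hg, ← hFl_mul, hcomm, hFl_mul, hζ, hFlFr]
    refine ⟨fun t _ b => hcomm b t, ?_⟩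
    have main : ∀ (ts : List ℝ) (t : ℝ) (b : B),
        Bl _ b (timeOrderedUnitComp ι tmul Fr eB g t ts)
          = Br _ b (timeOrderedUnitComp ι tmul Fr eB g t ts) := by
      intro ts
      induction ts with
      | nil =>
        intro t b
        simp only [timeOrderedUnitComp, List.length_nil]
        rw [hι_l, hι_r, hgc]
      | cons s rest ih =>
        intro t b
        cases rest with
        | nil =>
          simp only [timeOrderedUnitComp, List.length_cons, List.length_nil]
          rw [hι_l, hι_r, hFlFr, hgc, ← hFr_mul, ← hFr_mul, hcomm]
        | cons s' rest' =>
          simp only [timeOrderedUnitComp]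
          refine (htmul_l _ b _ _).trans (Eq.trans ?_ (htmul_r _ b _ _).symm)
          rw [hgc, htmul_mid]
          exact congrArg _ (ih s b)
    exact fun b t ts _ _ _ => main ts t b
end

section
/- Let ℬ be a unital C*-algebra, E a Hilbert ℬ-module, ϑ = (ϑ_t)_{t≥0} a semigroup of unital endomorphisms of ℬ^a(E), and ξ ∈ E a unit vector. Define j_0(b) = ξbξ*, j_t = ϑ_t ∘ j_0, and p_t = j_t(1). If p_t ≥ p_0 for all t (weak dilation condition), then T_t(b) := ⟨ξ, j_t(b)ξ⟩ defines a semigroup of unital completely positive maps on ℬ: T_{s+t} = T_s ∘ T_t and T_t(1) = 1. -/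
/-- The December 2024 Mathlib `CStarModule` (right `Aᵐᵒᵖ`-action, inner product `A`-linear on
the right: `⟪x, y <• a⟫ = ⟪x, y⟫ * a`), whose Mathlib namesake now uses a left `A`-action. -/
class OldCStarModule (A E : Type*) [NonUnitalSemiring A] [StarRing A]
    [Module ℂ A] [AddCommGroup E] [Module ℂ E] [PartialOrder A] [SMul Aᵐᵒᵖ E] [Norm A] [Norm E]
    extends Inner A E where
  inner_add_right {x} {y} {z} : inner x (y + z) = inner x y + inner x z
  inner_self_nonneg {x} : 0 ≤ inner x x
  inner_self {x} : inner x x = 0 ↔ x = 0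
  inner_op_smul_right {a : A} {x y : E} : inner x (MulOpposite.op a • y) = inner x y * a
  inner_smul_right_complex {z : ℂ} {x} {y} : inner x (z • y) = z • inner x y
  star_inner x y : star (inner x y) = inner y x
  norm_eq_sqrt_norm_inner_self x : ‖x‖ = √‖inner x x‖

/-- **Weak dilations compress to CP-semigroups.**
Let `E` be a Hilbert `ℬ`-module with unit vector `ξ`, let `ϑ = (ϑ_t)` be a semigroup of
unital *-endomorphisms of `ℬ^a(E)` (encoded below as multiplicative, additive, unital,
adjoint-preserving maps `Θ t` on right `ℬ`-linear maps of `E`), let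
`j₀(b) = ξbξ*`, `j_t = ϑ_t ∘ j₀` and `p_t = j_t(1)`.  If `p_t ≥ p₀` for all `t ≥ 0`
(weak dilation condition), then `T_t(b) = ⟪ξ, j_t(b)ξ⟫` defines a semigroup of unital
completely positive maps on `ℬ`: `T_{s+t} = T_s ∘ T_t` and `T_t(1) = 1`. -/
theorem weak_dilation_gives_CP_semigroup
    {ℬ : Type*} [CStarAlgebra ℬ] [PartialOrder ℬ] [StarOrderedRing ℬ]
    {E : Type*} [AddCommGroup E] [Module ℂ E] [Module ℬᵐᵒᵖ E] [Norm E] [OldCStarModule ℬ E]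
    (ξ : E) (hξ : (inner ℬ ξ ξ : ℬ) = 1)
    (Θ : ℝ → (E →ₗ[ℬᵐᵒᵖ] E) → (E →ₗ[ℬᵐᵒᵖ] E))
    (hΘ_semi : ∀ s t : ℝ, 0 ≤ s → 0 ≤ t → ∀ f, Θ (s + t) f = Θ s (Θ t f))
    (hΘ_zero : ∀ f, Θ 0 f = f)
    (hΘ_mul : ∀ t, 0 ≤ t → ∀ f g, Θ t (f * g) = Θ t f * Θ t g)
    (hΘ_add : ∀ t, 0 ≤ t → ∀ f g, Θ t (f + g) = Θ t f + Θ t g)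
    (hΘ_one : ∀ t, 0 ≤ t → Θ t 1 = 1)
    -- `Θ t` preserves adjoints: if `g` is an adjoint of `f` then `Θ t g` is an adjoint
    -- of `Θ t f`:
    (hΘ_star : ∀ t, 0 ≤ t → ∀ f g : E →ₗ[ℬᵐᵒᵖ] E,
      (∀ x y, (inner ℬ (f x) y : ℬ) = inner ℬ x (g y)) →
      (∀ x y, (inner ℬ (Θ t f x) y : ℬ) = inner ℬ x (Θ t g y)))
    -- `j₀ b = ξbξ*`:
    (j₀ : ℬ → E →ₗ[ℬᵐᵒᵖ] E)
    (hj₀ : ∀ b y, j₀ b y = MulOpposite.op (b * (inner ℬ ξ y : ℬ)) • ξ)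
    -- the weak dilation condition `p_t ≥ p₀`, i.e. `p_t p₀ = p₀`:
    (hincr : ∀ t, 0 ≤ t → Θ t (j₀ 1) * j₀ 1 = j₀ 1)
    (T : ℝ → ℬ → ℬ)
    (hT : ∀ t b, T t b = (inner ℬ ξ (Θ t (j₀ b) ξ) : ℬ)) :
    (∀ s t : ℝ, 0 ≤ s → 0 ≤ t → ∀ b, T (s + t) b = T s (T t b)) ∧
    (∀ t, 0 ≤ t → T t 1 = 1) ∧
    -- complete positivity of each `T t`:
    (∀ t, 0 ≤ t → ∀ (n : ℕ) (b c : Fin n → ℬ),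
      0 ≤ ∑ i, ∑ j, star (c i) * T t (star (b i) * b j) * c j) := by
  classical
  have hinR : ∀ (a : ℬ) (x y : E), (inner ℬ x (MulOpposite.op a • y) : ℬ) = inner ℬ x y * a :=
    fun a x y => OldCStarModule.inner_op_smul_right
  have hinL : ∀ (a : ℬ) (x y : E), (inner ℬ (MulOpposite.op a • x) y : ℬ) = star a * inner ℬ x y :=
    fun a x y => by
      rw [← OldCStarModule.star_inner y, OldCStarModule.inner_op_smul_right, star_mul,
        OldCStarModule.star_inner]
  -- j₀ 1 ξ = ξ
  have hp0ξ : j₀ 1 ξ = ξ := by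
    rw [hj₀]; simp [hξ]
  -- Θ t (j₀ 1) ξ = ξ for t ≥ 0
  have hptξ : ∀ t, 0 ≤ t → Θ t (j₀ 1) ξ = ξ := by
    intro t ht
    have := congrArg (fun f => f ξ) (hincr t ht)
    simpa [Module.End.mul_apply, hp0ξ] using this
  -- j₀ b is adjoint to j₀ (star b)
  have hj₀_adj : ∀ (b : ℬ) (x y : E),
      (inner ℬ (j₀ b x) y : ℬ) = inner ℬ x (j₀ (star b) y) := by
    intro b x y
    rw [hj₀ b x, hj₀ (star b) y, hinL, hinR, star_mul, OldCStarModule.star_inner, mul_assoc]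
  -- j₀ is multiplicative
  have hj₀mul : ∀ a b : ℬ, j₀ (a * b) = j₀ a * j₀ b := by
    intro a b
    ext x
    simp only [Module.End.mul_apply, hj₀, OldCStarModule.inner_op_smul_right, hξ, one_mul,
      mul_assoc]
  -- self-adjointness of Θ t (j₀ 1)
  have hpt_adj : ∀ t, 0 ≤ t → ∀ x y : E,
      (inner ℬ (Θ t (j₀ 1) x) y : ℬ) = inner ℬ x (Θ t (j₀ 1) y) := by
    intro t ht
    exact hΘ_star t ht (j₀ 1) (j₀ 1) (by simpa using hj₀_adj 1)
  -- ⟪ξ, Θ t (j₀ 1) y⟫ = ⟪ξ, y⟫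
  have hpt_inner : ∀ t, 0 ≤ t → ∀ y : E,
      (inner ℬ ξ (Θ t (j₀ 1) y) : ℬ) = inner ℬ ξ y := by
    intro t ht y
    calc (inner ℬ ξ (Θ t (j₀ 1) y) : ℬ) = inner ℬ (Θ t (j₀ 1) ξ) y := (hpt_adj t ht ξ y).symm
      _ = inner ℬ ξ y := by rw [hptξ t ht]
  -- key compression identity: j₀ ⟪ξ, f ξ⟫ = j₀ 1 * f * j₀ 1
  have hcompress : ∀ f : E →ₗ[ℬᵐᵒᵖ] E,
      j₀ (inner ℬ ξ (f ξ)) = j₀ 1 * f * j₀ 1 := by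
    intro f
    ext x
    simp only [Module.End.mul_apply, hj₀, map_smul, OldCStarModule.inner_op_smul_right,
      one_mul, mul_assoc]
  refine ⟨?_, ?_, ?_⟩
  · -- semigroup property
    intro s t hs ht b
    rw [hT, hT, hT, hcompress (Θ t (j₀ b)), hΘ_mul s hs, hΘ_mul s hs, Module.End.mul_apply,
      Module.End.mul_apply, hptξ s hs, hpt_inner s hs, hΘ_semi s t hs ht]
  · -- unitality
    intro t ht
    rw [hT, hptξ t ht, hξ]
  · -- complete positivity
    intro t ht n b c
    have hsumR : ∀ (x : E) (f : Fin n → E), (inner ℬ x (∑ i, f i) : ℬ) = ∑ i, inner ℬ x (f i) :=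
        fun x f => map_sum (AddMonoidHom.mk' (fun y => (inner ℬ x y : ℬ))
          (fun _ _ => OldCStarModule.inner_add_right)) f Finset.univ
    have hsumL : ∀ (y : E) (f : Fin n → E), (inner ℬ (∑ i, f i) y : ℬ) = ∑ i, inner ℬ (f i) y := by
      intro y f
      rw [← OldCStarModule.star_inner y, hsumR, star_sum]
      simp only [OldCStarModule.star_inner]
    have key : ∀ i j, star (c i) * T t (star (b i) * b j) * c j =
        inner ℬ (Θ t (j₀ (b i)) (MulOpposite.op (c i) • ξ))
              (Θ t (j₀ (b j)) (MulOpposite.op (c j) • ξ)) := by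
      intro i j
      have hadj : ∀ x y, (inner ℬ (Θ t (j₀ (b i)) x) y : ℬ)
          = inner ℬ x (Θ t (j₀ (star (b i))) y) :=
        hΘ_star t ht (j₀ (b i)) (j₀ (star (b i))) (fun x y => hj₀_adj (b i) x y)
      rw [hT, hj₀mul, hΘ_mul t ht, Module.End.mul_apply]
      simp only [map_smul, OldCStarModule.inner_op_smul_right]
      rw [hinL, hadj, mul_assoc]
    calc (0 : ℬ) ≤ inner ℬ (∑ i, Θ t (j₀ (b i)) (MulOpposite.op (c i) • ξ))
          (∑ j, Θ t (j₀ (b j)) (MulOpposite.op (c j) • ξ)) :=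
        OldCStarModule.inner_self_nonneg
      _ = ∑ i, ∑ j, star (c i) * T t (star (b i) * b j) * c j := by
        rw [hsumL]
        exact Finset.sum_congr rfl fun i _ => by
          rw [hsumR]
          exact Finset.sum_congr rfl fun j _ => (key i j).symm
end

section
/- Let ℬ be a unital C*-algebra, E a Hilbert ℬ-module with unit vector ξ, and ϑ a strict E₀-semigroup on ℬ^a(E) with p_t := ϑ_t(ξξ*) ≥ ξξ* for all t. If moreover bξ = ξb in E for a given left ℬ-action on E and ϑ_t(ξξ*) commutes with the left action for all t, then T_t(b) = ⟨ξ, ϑ_t(ξbξ*)ξ⟩ equals b for all b ∈ ℬ and t ≥ 0 if and only if the unit (ξ_t)_{t≥0} with ξ_t = ξ ∈ p_t E is central (bξ_t = ξ_t b). -/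
/-- The Hilbert C⋆-module class `CStarModule` as it stood in Mathlib of December 2024
(right `A`-module via `Aᵐᵒᵖ`); Mathlib's `CStarModule` is now a left-module notion. -/
class CStarModuleOld (A E : Type*) [NonUnitalSemiring A] [StarRing A]
    [Module ℂ A] [AddCommGroup E] [Module ℂ E] [PartialOrder A] [SMul Aᵐᵒᵖ E] [Norm A] [Norm E]
    extends Inner A E where
  inner_add_right {x} {y} {z} : inner x (y + z) = inner x y + inner x z
  inner_self_nonneg {x} : 0 ≤ inner x x
  inner_self {x} : inner x x = 0 ↔ x = 0
  inner_op_smul_right {a : A} {x y : E} : inner x (MulOpposite.op a • y) = inner x y * a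
  inner_smul_right_complex {z : ℂ} {x} {y} : inner x (z • y) = z • inner x y
  star_inner x y : star (inner x y) = inner y x
  norm_eq_sqrt_norm_inner_self x : ‖x‖ = Real.sqrt ‖inner x x‖

theorem CStarModuleOld.inner_sub_right'
    {ℬ : Type*} [CStarAlgebra ℬ] [PartialOrder ℬ] [StarOrderedRing ℬ]
    {E : Type*} [AddCommGroup E] [Module ℂ E] [Module ℬᵐᵒᵖ E] [Norm E] [CStarModuleOld ℬ E]
    (x y z : E) : (inner ℬ x (y - z) : ℬ) = inner ℬ x y - inner ℬ x z := by
  refine eq_sub_of_add_eq ?_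
  rw [← CStarModuleOld.inner_add_right, sub_add_cancel]

theorem CStarModuleOld.inner_sub_left'
    {ℬ : Type*} [CStarAlgebra ℬ] [PartialOrder ℬ] [StarOrderedRing ℬ]
    {E : Type*} [AddCommGroup E] [Module ℂ E] [Module ℬᵐᵒᵖ E] [Norm E] [CStarModuleOld ℬ E]
    (x y z : E) : (inner ℬ (y - z) x : ℬ) = inner ℬ y x - inner ℬ z x := by
  rw [← CStarModuleOld.star_inner x (y - z), CStarModuleOld.inner_sub_right', star_sub,
    CStarModuleOld.star_inner, CStarModuleOld.star_inner]

theorem CStarModuleOld.inner_op_smul_left'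
    {ℬ : Type*} [CStarAlgebra ℬ] [PartialOrder ℬ] [StarOrderedRing ℬ]
    {E : Type*} [AddCommGroup E] [Module ℂ E] [Module ℬᵐᵒᵖ E] [Norm E] [CStarModuleOld ℬ E]
    (a : ℬ) (x y : E) : (inner ℬ (MulOpposite.op a • x) y : ℬ) = star a * inner ℬ x y := by
  rw [← CStarModuleOld.star_inner y (MulOpposite.op a • x), CStarModuleOld.inner_op_smul_right,
    star_mul, CStarModuleOld.star_inner]

/-- **A weak dilation is a (weak) noise iff the associated unit is central.**
Let `E` be a Hilbert `ℬ`-module with unit vector `ξ` and a left `ℬ`-action `L`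
satisfying `bξ = ξb`, and let `ϑ` (encoded by `Θ` acting on right `ℬ`-linear maps) be a
strict E₀-semigroup on `ℬ^a(E)` with `p_t := ϑ_t(ξξ*) ≥ ξξ*` and such that each
`ϑ_t(ξξ*)` commutes with the left action.  Then `T_t(b) = ⟪ξ, ϑ_t(ξbξ*)ξ⟫ = b` for all
`b` and `t ≥ 0` if and only if the unit `(ξ_t)` (with `ξ_t = ξ ∈ p_t E` and left action
`b · x = ϑ_t(ξbξ*)x`) is central, i.e. `ϑ_t(ξbξ*)ξ = ξb` for all `b` and `t ≥ 0`. -/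
theorem weak_dilation_is_noise_iff_unit_central
    {ℬ : Type*} [CStarAlgebra ℬ] [PartialOrder ℬ] [StarOrderedRing ℬ]
    {E : Type*} [AddCommGroup E] [Module ℂ E] [Module ℬᵐᵒᵖ E] [Norm E] [CStarModuleOld ℬ E]
    (ξ : E) (hξ : (inner ℬ ξ ξ : ℬ) = 1)
    -- the given left action of ℬ on E (by right `ℬ`-linear maps):
    (L : ℬ → E →ₗ[ℬᵐᵒᵖ] E)
    (hL_mul : ∀ a b, L (a * b) = L a * L b) (hL_one : L 1 = 1)
    -- `bξ = ξb`:
    (hLξ : ∀ b, L b ξ = MulOpposite.op b • ξ)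
    (Θ : ℝ → (E →ₗ[ℬᵐᵒᵖ] E) → (E →ₗ[ℬᵐᵒᵖ] E))
    (hΘ_semi : ∀ s t : ℝ, 0 ≤ s → 0 ≤ t → ∀ f, Θ (s + t) f = Θ s (Θ t f))
    (hΘ_zero : ∀ f, Θ 0 f = f)
    (hΘ_mul : ∀ t, 0 ≤ t → ∀ f g, Θ t (f * g) = Θ t f * Θ t g)
    (hΘ_add : ∀ t, 0 ≤ t → ∀ f g, Θ t (f + g) = Θ t f + Θ t g)
    (hΘ_one : ∀ t, 0 ≤ t → Θ t 1 = 1)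
    (hΘ_star : ∀ t, 0 ≤ t → ∀ f g : E →ₗ[ℬᵐᵒᵖ] E,
      (∀ x y, (inner ℬ (f x) y : ℬ) = inner ℬ x (g y)) →
      (∀ x y, (inner ℬ (Θ t f x) y : ℬ) = inner ℬ x (Θ t g y)))
    -- `j₀ b = ξbξ*`:
    (j₀ : ℬ → E →ₗ[ℬᵐᵒᵖ] E)
    (hj₀ : ∀ b y, j₀ b y = MulOpposite.op (b * (inner ℬ ξ y : ℬ)) • ξ)
    -- `p_t = ϑ_t(ξξ*) ≥ ξξ* = p₀`:
    (hincr : ∀ t, 0 ≤ t → Θ t (j₀ 1) * j₀ 1 = j₀ 1)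
    -- `ϑ_t(ξξ*)` commutes with the left action:
    (hcomm : ∀ t, 0 ≤ t → ∀ b, Θ t (j₀ 1) * L b = L b * Θ t (j₀ 1))
    (T : ℝ → ℬ → ℬ)
    (hT : ∀ t b, T t b = (inner ℬ ξ (Θ t (j₀ b) ξ) : ℬ)) :
    (∀ t, 0 ≤ t → ∀ b, T t b = b) ↔
    (∀ t, 0 ≤ t → ∀ b, Θ t (j₀ b) ξ = MulOpposite.op b • ξ) := by
  have hinner_ξ_smul : ∀ c : ℬ, (inner ℬ ξ (MulOpposite.op c • ξ) : ℬ) = c := by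
    intro c
    rw [CStarModuleOld.inner_op_smul_right, hξ, one_mul]
  have hadj : ∀ c : ℬ, ∀ x y : E, (inner ℬ (j₀ c x) y : ℬ) = inner ℬ x (j₀ (star c) y) := by
    intro c x y
    rw [hj₀, hj₀, CStarModuleOld.inner_op_smul_left', CStarModuleOld.inner_op_smul_right]
    rw [star_mul, ← CStarModuleOld.star_inner ξ x, mul_assoc]
  have hj₀mul : ∀ a b : ℬ, j₀ a * j₀ b = j₀ (a * b) := by
    intro a b
    ext y
    rw [Module.End.mul_apply, hj₀, hj₀, hj₀, hinner_ξ_smul]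
    rw [mul_assoc]
  constructor
  · intro hn t ht b
    set v := Θ t (j₀ b) ξ with hv
    have hstar : ∀ x y : E, (inner ℬ (Θ t (j₀ b) x) y : ℬ) = inner ℬ x (Θ t (j₀ (star b)) y) :=
      hΘ_star t ht _ _ (hadj b)
    have h1 : (inner ℬ v ξ : ℬ) = star b := by
      rw [hv, hstar ξ ξ, ← hT, hn t ht]
    have h2 : (inner ℬ ξ v : ℬ) = b := by rw [hv, ← hT, hn t ht]
    have h3 : (inner ℬ v v : ℬ) = star b * b := by
      rw [hv, hstar ξ v, hv, ← Module.End.mul_apply, ← hΘ_mul t ht, hj₀mul, ← hT,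
        hn t ht]
    have key : (inner ℬ (v - MulOpposite.op b • ξ) (v - MulOpposite.op b • ξ) : ℬ) = 0 := by
      simp only [CStarModuleOld.inner_sub_left', CStarModuleOld.inner_sub_right',
        CStarModuleOld.inner_op_smul_left', CStarModuleOld.inner_op_smul_right, h1, h2, h3, hξ]
      noncomm_ring
    have := CStarModuleOld.inner_self.mp key
    rw [sub_eq_zero] at this
    exact this
  · intro hc t ht b
    rw [hT, hc t ht, hinner_ξ_smul]
end
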